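/- Let v ∈ ℝ^n with Σ_i v_i = 0, and let π be a uniformly random permutation. Then Var_π(⟨π(v), v⟩) ≤ ‖v‖⁴·(2/(n−1)); hence by Chebyshev, with probability at least 1 − δ, |⟨π(v), v⟩| ≤ ‖v‖²·√(2/((n−1)δ)) + ‖v‖²/(n−1). -/

import Mathlib

open BigOperators

section Aux

lemma sum_perm_mul {n : ℕ} (f : Equiv.Perm (Fin n) → ℝ) (σ : Equiv.Perm (Fin n)) :
    ∑ π : Equiv.Perm (Fin n), f (π * σ) = ∑ π, f π :=
  Equiv.sum_comp (Equiv.mulRight σ) f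

lemma exists_perm_two {n : ℕ} (i k i' k' : Fin n) (hik : i ≠ k) (h' : i' ≠ k') :
    ∃ σ : Equiv.Perm (Fin n), σ i = i' ∧ σ k = k' := by
  have hne : i' ≠ (Equiv.swap i i') k := by
    have : (Equiv.swap i i') i = i' := Equiv.swap_apply_left i i'
    intro h
    exact hik ((Equiv.swap i i').injective (this.trans h))
  refine ⟨Equiv.swap ((Equiv.swap i i') k) k' * Equiv.swap i i', ?_, ?_⟩
  · rw [Equiv.Perm.mul_apply, Equiv.swap_apply_left]
    exact Equiv.swap_apply_of_ne_of_ne hne h'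
  · rw [Equiv.Perm.mul_apply, Equiv.swap_apply_left]

lemma pair_indep {n : ℕ} (v : Fin n → ℝ) {i k i' k' : Fin n} (σ : Equiv.Perm (Fin n))
    (h1 : σ i = i') (h2 : σ k = k') :
    ∑ π : Equiv.Perm (Fin n), v (π i') * v (π k') = ∑ π : Equiv.Perm (Fin n), v (π i) * v (π k) := by
  rw [← sum_perm_mul (fun π => v (π i) * v (π k)) σ]
  simp [Equiv.Perm.mul_apply, h1, h2]

lemma second_moment {n : ℕ} (hn : 2 ≤ n) (v : Fin n → ℝ) (hc : ∑ i, v i = 0) :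
    ((n:ℝ) - 1) * ∑ π : Equiv.Perm (Fin n), (∑ i, v (π i) * v i) ^ 2
      = (Nat.factorial n : ℝ) * ((∑ i, v i * v i) * (∑ i, v i * v i)) := by
  set i₀ : Fin n := ⟨0, by omega⟩ with hi₀
  set k₀ : Fin n := ⟨1, by omega⟩ with hk₀
  have hik : i₀ ≠ k₀ := by simp [hi₀, hk₀, Fin.ext_iff]
  set S : ℝ := ∑ i, v i * v i with hS
  set U : ℝ := ∑ π : Equiv.Perm (Fin n), v (π i₀) * v (π i₀) with hU
  set T : ℝ := ∑ π : Equiv.Perm (Fin n), v (π i₀) * v (π k₀) with hT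
  have hUi : ∀ i : Fin n, ∑ π : Equiv.Perm (Fin n), v (π i) * v (π i) = U := by
    intro i
    exact pair_indep v (Equiv.swap i₀ i) (Equiv.swap_apply_left _ _) (Equiv.swap_apply_left _ _)
  have hTi : ∀ i k : Fin n, i ≠ k → ∑ π : Equiv.Perm (Fin n), v (π i) * v (π k) = T := by
    intro i k h
    obtain ⟨σ, h1, h2⟩ := exists_perm_two i₀ k₀ i k hik h
    exact pair_indep v σ h1 h2
  have hperm0 : ∀ π : Equiv.Perm (Fin n), ∑ i, v (π i) = 0 := fun π => by
    rw [Equiv.sum_comp π v]; exact hc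
  have hpermS : ∀ π : Equiv.Perm (Fin n), ∑ i, v (π i) * v (π i) = S := fun π => by
    rw [Equiv.sum_comp π (fun j => v j * v j)]
  have h1 : (n : ℝ) * U = (Nat.factorial n : ℝ) * S := by
    have e1 : ∑ i : Fin n, ∑ π : Equiv.Perm (Fin n), v (π i) * v (π i)
        = (Nat.factorial n : ℝ) * S := by
      rw [Finset.sum_comm, Finset.sum_congr rfl fun π _ => hpermS π]
      simp [Finset.card_univ, Fintype.card_perm, Fintype.card_fin, mul_comm]
    have e2 : ∑ i : Fin n, ∑ π : Equiv.Perm (Fin n), v (π i) * v (π i) = (n : ℝ) * U := by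
      rw [Finset.sum_congr rfl fun i _ => hUi i]
      simp [Finset.card_univ, Fintype.card_fin, mul_comm]
    rw [← e2, e1]
  have h2 : ((n : ℝ) - 1) * T = -U := by
    have hcard : ((Finset.univ.erase i₀).card : ℝ) = (n : ℝ) - 1 := by
      rw [Finset.card_erase_of_mem (Finset.mem_univ _)]
      simp only [Finset.card_univ, Fintype.card_fin]
      have : (1:ℕ) ≤ n := by omega
      push_cast [Nat.cast_sub this]
      ring
    have step : ∑ k ∈ Finset.univ.erase i₀, ∑ π : Equiv.Perm (Fin n), v (π i₀) * v (π k) = -U := by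
      rw [Finset.sum_comm]
      have : ∀ π : Equiv.Perm (Fin n), ∑ k ∈ Finset.univ.erase i₀, v (π i₀) * v (π k)
          = -(v (π i₀) * v (π i₀)) := by
        intro π
        rw [← Finset.mul_sum, Finset.sum_erase_eq_sub (Finset.mem_univ _), hperm0 π]
        ring
      simp only [this, Finset.sum_neg_distrib]
      rfl
    have step2 : ∑ k ∈ Finset.univ.erase i₀, ∑ π : Equiv.Perm (Fin n), v (π i₀) * v (π k)
        = ((Finset.univ.erase i₀).card : ℝ) * T := by
      rw [Finset.sum_congr rfl fun k hk => hTi i₀ k (Ne.symm (Finset.ne_of_mem_erase hk))]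
      simp [mul_comm]
    rw [← hcard, ← step2, step]
  have expand : ∑ π : Equiv.Perm (Fin n), (∑ i, v (π i) * v i) ^ 2
      = ∑ i, ∑ k, (v i * v k) * (∑ π : Equiv.Perm (Fin n), v (π i) * v (π k)) := by
    simp_rw [sq, Finset.sum_mul_sum, Finset.mul_sum]
    rw [Finset.sum_comm]
    refine Finset.sum_congr rfl fun i _ => ?_
    rw [Finset.sum_comm]
    refine Finset.sum_congr rfl fun k _ => ?_
    exact Finset.sum_congr rfl fun π _ => by ring
  have h3 : ∑ π : Equiv.Perm (Fin n), (∑ i, v (π i) * v i) ^ 2 = S * U - S * T := by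
    rw [expand]
    have : ∀ i : Fin n, ∑ k, (v i * v k) * (∑ π : Equiv.Perm (Fin n), v (π i) * v (π k))
        = v i * v i * U - v i * v i * T := by
      intro i
      rw [← Finset.add_sum_erase _ _ (Finset.mem_univ i), hUi i]
      have : ∑ k ∈ Finset.univ.erase i, (v i * v k) * (∑ π : Equiv.Perm (Fin n), v (π i) * v (π k))
          = ∑ k ∈ Finset.univ.erase i, (v i * T) * v k := by
        refine Finset.sum_congr rfl fun k hk => ?_
        rw [hTi i k (Ne.symm (Finset.ne_of_mem_erase hk))]
        ring
      rw [this, ← Finset.mul_sum, Finset.sum_erase_eq_sub (Finset.mem_univ _), hc]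
      ring
    rw [Finset.sum_congr rfl fun i _ => this i]
    rw [Finset.sum_sub_distrib, ← Finset.sum_mul, ← Finset.sum_mul, ← hS]
  rw [h3]
  linear_combination S * h1 - S * h2

end Aux

/-- Variance bound and Chebyshev-type deviation bound for the inner product between a
centered vector and a uniformly random permutation of itself. -/
theorem variance_inner_product_random_permutation
    (n : ℕ) (hn : 2 ≤ n) (v : Fin n → ℝ) (hc : ∑ i, v i = 0) :
    (∑ π : Equiv.Perm (Fin n), (∑ i, v (π i) * v i) ^ 2) / (Nat.factorial n : ℝ)
      - ((∑ π : Equiv.Perm (Fin n), ∑ i, v (π i) * v i) / (Nat.factorial n : ℝ)) ^ 2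
      ≤ (∑ i, (v i) ^ 2) ^ 2 * (2 / ((n : ℝ) - 1)) ∧
    ∀ δ : ℝ, 0 < δ → δ ≤ 1 →
      (1 - δ) * (Nat.factorial n : ℝ) ≤
        (Nat.card {π : Equiv.Perm (Fin n) //
          |∑ i, v (π i) * v i| ≤ (∑ i, (v i) ^ 2) * Real.sqrt (2 / (((n : ℝ) - 1) * δ))
            + (∑ i, (v i) ^ 2) / ((n : ℝ) - 1)} : ℝ) := by
  classical
  have hN2 : (2:ℝ) ≤ (n:ℝ) := by exact_mod_cast hn
  have hN1 : (0:ℝ) < (n:ℝ) - 1 := by linarith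
  have hF : (0:ℝ) < (Nat.factorial n : ℝ) := by exact_mod_cast n.factorial_pos
  have hSS : (∑ i, v i * v i) = ∑ i, (v i) ^ 2 :=
    Finset.sum_congr rfl fun i _ => (pow_two (v i)).symm
  set S : ℝ := ∑ i, (v i) ^ 2 with hSdef
  have hSnn : 0 ≤ S := Finset.sum_nonneg fun i _ => sq_nonneg _
  set SQ : ℝ := ∑ π : Equiv.Perm (Fin n), (∑ i, v (π i) * v i) ^ 2 with hSQ
  have hSM : ((n:ℝ) - 1) * SQ = (Nat.factorial n : ℝ) * (S * S) := by
    rw [hSQ, second_moment hn v hc, hSS]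
  have hSQnn : 0 ≤ SQ := Finset.sum_nonneg fun π _ => sq_nonneg _
  have hEX : SQ / (Nat.factorial n : ℝ) = S * S / ((n:ℝ) - 1) := by
    rw [div_eq_div_iff hF.ne' hN1.ne']
    linear_combination hSM
  constructor
  · rw [hEX]
    have hm := sq_nonneg ((∑ π : Equiv.Perm (Fin n), ∑ i, v (π i) * v i) / (Nat.factorial n : ℝ))
    have ha : 0 ≤ S * S / ((n:ℝ) - 1) := by positivity
    have hb : S ^ 2 * (2 / ((n:ℝ) - 1)) = 2 * (S * S / ((n:ℝ) - 1)) := by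
      field_simp
    rw [hb]
    linarith
  · intro δ hδ hδ1
    set P : Equiv.Perm (Fin n) → Prop := fun π =>
      |∑ i, v (π i) * v i| ≤ S * Real.sqrt (2 / (((n : ℝ) - 1) * δ)) + S / ((n : ℝ) - 1)
      with hP
    have hcard : (Nat.card {π : Equiv.Perm (Fin n) // P π} : ℝ)
        = ((Finset.univ.filter P).card : ℝ) := by
      rw [Nat.card_eq_fintype_card, Fintype.card_subtype]
    have hsplit : (Finset.univ.filter P).card + (Finset.univ.filter fun π => ¬ P π).card
        = Nat.factorial n := by
      rw [Finset.card_filter_add_card_filter_not]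
      simp [Finset.card_univ, Fintype.card_perm, Fintype.card_fin]
    set Bc : ℝ := ((Finset.univ.filter fun π => ¬ P π).card : ℝ) with hBc
    have hBcnn : 0 ≤ Bc := Nat.cast_nonneg _
    have hBbound : Bc ≤ δ * (Nat.factorial n : ℝ) := by
      rcases eq_or_lt_of_le hSnn with hS0 | hSpos
      · -- S = 0 : every permutation is good, B is empty
        have hv : ∀ i, v i = 0 := by
          intro i
          have h0 := (Finset.sum_eq_zero_iff_of_nonneg
            (fun i _ => sq_nonneg (v i))).mp hS0.symm i (Finset.mem_univ i)
          exact (pow_eq_zero_iff two_ne_zero).mp h0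
        have hPall : ∀ π, P π := by
          intro π
          rw [hP]
          simp only [hv, zero_mul, Finset.sum_const_zero, abs_zero, ← hS0]
          simp
        have : (Finset.univ.filter fun π => ¬ P π) = ∅ := by
          apply Finset.filter_eq_empty_iff.mpr
          intro π _
          simp [hPall π]
        rw [hBc, this]
        simp
        positivity
      · -- S > 0 : Chebyshev
        set t₀ : ℝ := S * Real.sqrt (2 / (((n : ℝ) - 1) * δ)) with ht₀
        have hxnn : (0:ℝ) ≤ 2 / (((n : ℝ) - 1) * δ) := by positivity
        have ht₀nn : 0 ≤ t₀ := by rw [ht₀]; positivity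
        have ht₀sq : t₀ ^ 2 = S ^ 2 * (2 / (((n : ℝ) - 1) * δ)) := by
          rw [ht₀, mul_pow, Real.sq_sqrt hxnn]
        have hkey : ∀ π ∈ (Finset.univ.filter fun π => ¬ P π),
            t₀ ^ 2 ≤ (∑ i, v (π i) * v i) ^ 2 := by
          intro π hπ
          have hnP : ¬ P π := (Finset.mem_filter.mp hπ).2
          rw [hP] at hnP
          push_neg at hnP
          have h1 : t₀ ≤ |∑ i, v (π i) * v i| := by
            have : 0 ≤ S / ((n:ℝ) - 1) := by positivity
            rw [ht₀]; linarith
          calc t₀ ^ 2 ≤ |∑ i, v (π i) * v i| ^ 2 := by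
                exact pow_le_pow_left₀ ht₀nn h1 2
            _ = (∑ i, v (π i) * v i) ^ 2 := sq_abs _
        have hsum : Bc * t₀ ^ 2 ≤ SQ := by
          have h1 : Bc * t₀ ^ 2
              = ∑ _π ∈ (Finset.univ.filter fun π => ¬ P π), t₀ ^ 2 := by
            rw [Finset.sum_const, nsmul_eq_mul, hBc]
          rw [h1]
          calc ∑ π ∈ (Finset.univ.filter fun π => ¬ P π), t₀ ^ 2
              ≤ ∑ π ∈ (Finset.univ.filter fun π => ¬ P π), (∑ i, v (π i) * v i) ^ 2 :=
                Finset.sum_le_sum hkey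
            _ ≤ SQ := Finset.sum_le_sum_of_subset_of_nonneg (Finset.subset_univ _)
                (fun π _ _ => sq_nonneg _)
        have hmul : Bc * t₀ ^ 2 * (((n:ℝ) - 1) * δ) ≤ SQ * (((n:ℝ) - 1) * δ) :=
          mul_le_mul_of_nonneg_right hsum (by positivity)
        have hd : (2 / (((n:ℝ) - 1) * δ)) * (((n:ℝ) - 1) * δ) = 2 :=
          div_mul_cancel₀ 2 (by positivity)
        have e1 : Bc * t₀ ^ 2 * (((n:ℝ) - 1) * δ) = Bc * S ^ 2 * 2 := by
          rw [ht₀sq]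
          linear_combination (Bc * S ^ 2) * hd
        have e2 : SQ * (((n:ℝ) - 1) * δ) = (Nat.factorial n : ℝ) * (S * S) * δ := by
          linear_combination δ * hSM
        rw [e1, e2] at hmul
        have hS2 : (0:ℝ) < S ^ 2 := pow_pos hSpos 2
        rw [← mul_le_mul_iff_of_pos_right hS2]
        linarith [hmul, mul_nonneg hBcnn hS2.le]
    rw [hcard]
    have hsplitR : ((Finset.univ.filter P).card : ℝ) + Bc = (Nat.factorial n : ℝ) := by
      rw [hBc]
      exact_mod_cast congrArg (Nat.cast : ℕ → ℝ) hsplit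
    linarith
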